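/- For every real ε ∈ (0, 1) and every natural number m ≥ 1, there exists a natural number k (depending only on ε and m) such that for every n ≥ 1 there is a fixed family of samples S : Fin n → (Fin k → Fin n) with the following property: for every labelling z : Fin n → Fin m and every label b, the number of indices i ∈ Fin n for which |(#{j ∈ Fin k : z(S i j) = b})/k − (#{x ∈ Fin n : z(x) = b})/n| ≥ ε is less than ε · n. (Existence of a fixed, deterministic sampling choice of constant sample size k that is simultaneously accurate, up to additive error ε, for all but an ε-fraction of processors, against every possible configuration; this is the combinatorial heart of the derandomisation of Probabilistic ε-RPK.) -/

import Mathlib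

open Finset

lemma pair_sum {n k : ℕ} (h : Fin n → ℝ) (j j' : Fin k) :
    ∑ t : Fin k → Fin n, h (t j) * h (t j') =
      if j = j' then (n:ℝ)^(k-1) * ∑ v, h v ^ 2 else (n:ℝ)^(k-2) * (∑ v, h v)^2 := by
  have key : ∀ t : Fin k → Fin n, h (t j) * h (t j') =
      ∏ i, ((if i = j then h (t i) else 1) * (if i = j' then h (t i) else 1)) := by
    intro t
    rw [Finset.prod_mul_distrib, Finset.prod_ite_eq' Finset.univ j (fun i => h (t i)),
      Finset.prod_ite_eq' Finset.univ j' (fun i => h (t i))]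
    simp
  simp_rw [key]
  rw [← Fintype.prod_sum (fun i v => (if i = j then h v else 1) * (if i = j' then h v else 1))]
  by_cases hjj : j = j'
  · subst hjj
    simp only [ite_self, if_pos rfl, eq_self_iff_true, if_true]
    rw [← Finset.mul_prod_erase Finset.univ _ (Finset.mem_univ j)]
    have h1 : ∀ i ∈ Finset.univ.erase j,
        (∑ v, (if i = j then h v else 1) * (if i = j then h v else 1)) = (n:ℝ) := by
      intro i hi
      simp [if_neg (Finset.ne_of_mem_erase hi)]
    rw [Finset.prod_congr rfl h1, Finset.prod_const, Finset.card_erase_of_mem (Finset.mem_univ j)]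
    simp only [Finset.card_univ, Fintype.card_fin, if_pos rfl]
    simp [← sq, mul_comm]
  · rw [if_neg hjj]
    rw [← Finset.mul_prod_erase Finset.univ _ (Finset.mem_univ j)]
    have hj' : j' ∈ Finset.univ.erase j := Finset.mem_erase.2 ⟨Ne.symm hjj, Finset.mem_univ _⟩
    rw [← Finset.mul_prod_erase _ _ hj']
    have h1 : ∀ i ∈ (Finset.univ.erase j).erase j',
        (∑ v, (if i = j then h v else 1) * (if i = j' then h v else 1)) = (n:ℝ) := by
      intro i hi
      simp [if_neg (Finset.ne_of_mem_erase hi),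
        if_neg (Finset.ne_of_mem_erase (Finset.mem_of_mem_erase hi))]
    rw [Finset.prod_congr rfl h1, Finset.prod_const,
      Finset.card_erase_of_mem hj', Finset.card_erase_of_mem (Finset.mem_univ j)]
    simp only [if_pos rfl, if_neg hjj, if_neg (Ne.symm hjj), Finset.card_univ, Fintype.card_fin,
      mul_one, one_mul]
    have : k - 1 - 1 = k - 2 := by omega
    rw [this]
    simp [mul_comm]
    ring

lemma var_sum {n k : ℕ} (h : Fin n → ℝ) (h0 : ∑ v, h v = 0) :
    ∑ t : Fin k → Fin n, (∑ j, h (t j))^2 = k * (n:ℝ)^(k-1) * ∑ v, h v ^ 2 := by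
  have expand : ∀ t : Fin k → Fin n, (∑ j, h (t j))^2 = ∑ j, ∑ j', h (t j) * h (t j') := by
    intro t; rw [sq, Finset.sum_mul_sum]
  simp_rw [expand]
  rw [Finset.sum_comm]
  have : ∀ j : Fin k, ∑ t : Fin k → Fin n, ∑ j', h (t j) * h (t j')
      = (n:ℝ)^(k-1) * ∑ v, h v ^ 2 := by
    intro j
    rw [Finset.sum_comm]
    have : ∀ j' : Fin k, ∑ t : Fin k → Fin n, h (t j) * h (t j')
        = if j = j' then (n:ℝ)^(k-1) * ∑ v, h v ^ 2 else 0 := by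
      intro j'
      rw [pair_sum h j j', h0]
      simp
    simp_rw [this]
    simp
  simp_rw [this]
  rw [Finset.sum_const, Finset.card_univ, Fintype.card_fin, nsmul_eq_mul]
  ring

lemma cheb {n k : ℕ} (hn : 1 ≤ n) (hk : 1 ≤ k) {ε : ℝ} (hε : 0 < ε)
    (P : Fin n → Prop) [DecidablePred P] :
    ((Finset.univ.filter (fun t : Fin k → Fin n =>
        ε ≤ |((Finset.univ.filter (fun j => P (t j))).card : ℝ)/k
              - ((Finset.univ.filter P).card : ℝ)/n|)).card : ℝ)
      ≤ (n:ℝ)^k / (4 * k * ε^2) := by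
  have hn0 : (0:ℝ) < n := by exact_mod_cast hn
  have hk0 : (0:ℝ) < k := by exact_mod_cast hk
  set c : ℝ := ((Finset.univ.filter P).card : ℝ) with hc
  set h : Fin n → ℝ := fun v => (if P v then 1 else 0) - c / n with hh
  have hcval : ∑ v, (if P v then (1:ℝ) else 0) = c := by
    rw [Finset.sum_boole]
  have h0 : ∑ v, h v = 0 := by
    simp only [hh, Finset.sum_sub_distrib, hcval, Finset.sum_const, Finset.card_univ,
      Fintype.card_fin, nsmul_eq_mul]
    field_simp
    ring
  have hcle : c ≤ n := by
    have := Finset.card_filter_le Finset.univ P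
    simp only [Finset.card_univ, Fintype.card_fin] at this
    rw [hc]
    exact_mod_cast this
  have hc0 : 0 ≤ c := by rw [hc]; positivity
  have hsumsq : ∑ v, h v ^ 2 ≤ (n:ℝ)/4 := by
    have hterm : ∀ v, h v ^ 2
        = (if P v then (1:ℝ) else 0) - 2*(c/n)*(if P v then 1 else 0) + (c/n)^2 := by
      intro v; by_cases hv : P v <;> simp [hh, hv] <;> ring
    simp_rw [hterm]
    rw [Finset.sum_add_distrib, Finset.sum_sub_distrib, hcval, ← Finset.mul_sum, hcval,
      Finset.sum_const, Finset.card_univ, Fintype.card_fin, nsmul_eq_mul]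
    have h1 : c - 2*(c/n)*c + n*(c/n)^2 = c*(n - c)/n := by field_simp; ring
    rw [h1]
    rw [div_le_div_iff₀ hn0 (by norm_num : (0:ℝ) < 4)]
    nlinarith [sq_nonneg ((n:ℝ) - 2*c)]
  have hcount : ∀ t : Fin k → Fin n,
      ((Finset.univ.filter (fun j => P (t j))).card : ℝ) = ∑ j, (if P (t j) then (1:ℝ) else 0) := by
    intro t; rw [Finset.sum_boole]
  have hsumh : ∀ t : Fin k → Fin n,
      ∑ j, h (t j) = ((Finset.univ.filter (fun j => P (t j))).card : ℝ) - k * (c/n) := by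
    intro t
    simp only [hh, Finset.sum_sub_distrib, Finset.sum_const, Finset.card_univ,
      Fintype.card_fin, nsmul_eq_mul]
    rw [hcount t]
  set Btup := Finset.univ.filter (fun t : Fin k → Fin n =>
      ε ≤ |((Finset.univ.filter (fun j => P (t j))).card : ℝ)/k - c/n|) with hB
  have hptwise : ∀ t ∈ Btup, (k*ε)^2 ≤ (∑ j, h (t j))^2 := by
    intro t ht
    rw [Finset.mem_filter] at ht
    have habs : k * ε ≤ |∑ j, h (t j)| := by
      rw [hsumh t]
      have : ((Finset.univ.filter (fun j => P (t j))).card : ℝ) - k * (c/n)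
          = k * (((Finset.univ.filter (fun j => P (t j))).card : ℝ)/k - c/n) := by
        field_simp
      rw [this, abs_mul, abs_of_pos hk0]
      exact mul_le_mul_of_nonneg_left ht.2 hk0.le
    calc (k*ε)^2 ≤ |∑ j, h (t j)|^2 := by
          apply pow_le_pow_left₀ (by positivity) habs
      _ = (∑ j, h (t j))^2 := sq_abs _
  have hcard : (Btup.card : ℝ) * (k*ε)^2 ≤ ∑ t : Fin k → Fin n, (∑ j, h (t j))^2 := by
    calc (Btup.card : ℝ) * (k*ε)^2 ≤ ∑ t ∈ Btup, (∑ j, h (t j))^2 := by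
          rw [← nsmul_eq_mul]
          exact Finset.card_nsmul_le_sum Btup _ _ hptwise
      _ ≤ ∑ t : Fin k → Fin n, (∑ j, h (t j))^2 :=
          Finset.sum_le_sum_of_subset_of_nonneg (Finset.subset_univ _)
            (fun t _ _ => sq_nonneg _)
  rw [var_sum h h0] at hcard
  have hfin : (Btup.card : ℝ) * (k*ε)^2 ≤ k * (n:ℝ)^k / 4 := by
    calc (Btup.card : ℝ) * (k*ε)^2 ≤ k * (n:ℝ)^(k-1) * ((n:ℝ)/4) := by
          apply hcard.trans
          apply mul_le_mul_of_nonneg_left hsumsq (by positivity)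
      _ = k * (n:ℝ)^k / 4 := by
          have : (n:ℝ)^(k-1) * n = (n:ℝ)^k := by
            rw [← pow_succ]
            congr 1
            omega
          field_simp
          exact this
  rw [le_div_iff₀ (by positivity)]
  nlinarith [hfin, hk0, sq_nonneg ε, mul_pos hk0 (mul_pos hε hε)]

lemma choose_le_two_pow' (n r : ℕ) : n.choose r ≤ 2 ^ n := by
  rcases le_or_gt r n with hr | hr
  · calc n.choose r ≤ ∑ i ∈ Finset.range (n+1), n.choose i :=
        Finset.single_le_sum (fun i _ => Nat.zero_le _) (Finset.mem_range.2 (by omega))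
      _ = 2 ^ n := Nat.sum_range_choose n
  · rw [Nat.choose_eq_zero_of_lt hr]; exact Nat.zero_le _

lemma count_many_bad {n k r : ℕ} (B : Finset (Fin k → Fin n)) :
    (Finset.univ.filter (fun S : Fin n → Fin k → Fin n =>
        r ≤ (Finset.univ.filter (fun i => S i ∈ B)).card)).card
      ≤ n.choose r * (B.card ^ r * (n^k) ^ (n - r)) := by
  classical
  have hsub : (Finset.univ.filter (fun S : Fin n → Fin k → Fin n =>
        r ≤ (Finset.univ.filter (fun i => S i ∈ B)).card))
      ⊆ (Finset.powersetCard r (Finset.univ : Finset (Fin n))).biUnion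
        (fun T => Fintype.piFinset (fun i => if i ∈ T then B else Finset.univ)) := by
    intro S hS
    rw [Finset.mem_filter] at hS
    obtain ⟨T, hTsub, hTcard⟩ := Finset.exists_subset_card_eq hS.2
    refine Finset.mem_biUnion.2 ⟨T, ?_, ?_⟩
    · exact Finset.mem_powersetCard.2 ⟨Finset.subset_univ _, hTcard⟩
    · rw [Fintype.mem_piFinset]
      intro i
      by_cases hi : i ∈ T
      · rw [if_pos hi]; exact (Finset.mem_filter.1 (hTsub hi)).2
      · rw [if_neg hi]; exact Finset.mem_univ _
  calc (Finset.univ.filter (fun S : Fin n → Fin k → Fin n =>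
        r ≤ (Finset.univ.filter (fun i => S i ∈ B)).card)).card
      ≤ ((Finset.powersetCard r (Finset.univ : Finset (Fin n))).biUnion
        (fun T => Fintype.piFinset (fun i => if i ∈ T then B else Finset.univ))).card :=
        Finset.card_le_card hsub
    _ ≤ ∑ T ∈ Finset.powersetCard r (Finset.univ : Finset (Fin n)),
        (Fintype.piFinset (fun i => if i ∈ T then B else Finset.univ)).card :=
        Finset.card_biUnion_le
    _ ≤ ∑ T ∈ Finset.powersetCard r (Finset.univ : Finset (Fin n)),
        B.card ^ r * (n^k) ^ (n - r) := by
        apply Finset.sum_le_sum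
        intro T hT
        have hTcard : T.card = r := (Finset.mem_powersetCard.1 hT).2
        rw [Fintype.card_piFinset]
        have : ∀ i, ((if i ∈ T then B else Finset.univ).card)
            = if i ∈ T then B.card else n^k := by
          intro i
          by_cases hi : i ∈ T <;> simp [hi, Finset.card_univ]
        simp_rw [this]
        rw [Finset.prod_ite (fun _ => B.card) (fun _ => n^k), Finset.prod_const,
          Finset.prod_const]
        have h1 : Finset.univ.filter (fun i => i ∈ T) = T := by
          ext i; simp
        have h2 : (Finset.univ.filter (fun i => i ∉ T)).card = n - r := by
          have : Finset.univ.filter (fun i => i ∉ T) = Tᶜ := by ext i; simp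
          rw [this, Finset.card_compl, Fintype.card_fin, hTcard]
        rw [h1, h2, hTcard]
    _ = n.choose r * (B.card ^ r * (n^k) ^ (n - r)) := by
        rw [Finset.sum_const, Finset.card_powersetCard, Finset.card_univ, Fintype.card_fin,
          smul_eq_mul]


lemma count_many_bad_real {n k r : ℕ} (B : Finset (Fin k → Fin n)) {D : ℝ}
    (hD : (B.card : ℝ) ≤ D) :
    ((Finset.univ.filter (fun S : Fin n → Fin k → Fin n =>
        r ≤ (Finset.univ.filter (fun i => S i ∈ B)).card)).card : ℝ)
      ≤ (n.choose r : ℝ) * (D ^ r * ((n:ℝ)^k) ^ (n - r)) := by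
  have h := count_many_bad (r := r) B
  have hB0 : (0:ℝ) ≤ (B.card : ℝ) := Nat.cast_nonneg _
  have hD0 : (0:ℝ) ≤ D := hB0.trans hD
  calc ((Finset.univ.filter (fun S : Fin n → Fin k → Fin n =>
        r ≤ (Finset.univ.filter (fun i => S i ∈ B)).card)).card : ℝ)
      ≤ ((n.choose r * (B.card ^ r * (n^k) ^ (n - r)) : ℕ) : ℝ) := Nat.cast_le.mpr h
    _ = (n.choose r : ℝ) * (((B.card : ℝ)) ^ r * ((n:ℝ)^k) ^ (n - r)) := by push_cast; ring
    _ ≤ (n.choose r : ℝ) * (D ^ r * ((n:ℝ)^k) ^ (n - r)) := by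
        apply mul_le_mul_of_nonneg_left _ (Nat.cast_nonneg _)
        apply mul_le_mul_of_nonneg_right _ (by positivity)
        exact pow_le_pow_left₀ hB0 hD r

/-- Derandomisation: for every `ε ∈ (0,1)` and number of labels `m ≥ 1`, there is a constant
sample size `k` such that for every population size `n ≥ 1` there is a fixed family of
samples that, for every labelling and every label, is accurate to within `ε` for all but
fewer than `ε·n` of the processors. -/
theorem exists_good_sampling_choice
    {ε : ℝ} (hε0 : 0 < ε) (hε1 : ε < 1) (m : ℕ) (hm : 1 ≤ m) :
    ∃ k : ℕ, ∀ n : ℕ, 1 ≤ n →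
      ∃ S : Fin n → Fin k → Fin n,
        ∀ (z : Fin n → Fin m) (b : Fin m),
          ((Finset.univ.filter (fun i : Fin n =>
              ε ≤ |((Finset.univ.filter (fun j : Fin k => z (S i j) = b)).card : ℝ) / k
                    - ((Finset.univ.filter (fun x : Fin n => z x = b)).card : ℝ) / n|)).card : ℝ)
            < ε * n := by
  classical
  set K : ℝ := (2 * (m:ℝ)^2) ^ (1/ε) with hK
  have hm1 : (1:ℝ) ≤ 2 * (m:ℝ)^2 := by
    have : (1:ℝ) ≤ (m:ℝ) := by exact_mod_cast hm
    nlinarith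
  have hK1 : 1 ≤ K := Real.one_le_rpow hm1 (by positivity)
  refine ⟨⌈K / (4*ε^2)⌉₊ + 1, ?_⟩
  set k : ℕ := ⌈K / (4*ε^2)⌉₊ + 1 with hkdef
  have hk1 : 1 ≤ k := by omega
  have hk0 : (0:ℝ) < k := by exact_mod_cast hk1
  set δ : ℝ := 1 / (4*k*ε^2) with hδ
  have hδ0 : 0 < δ := by rw [hδ]; positivity
  have hKlt : K < 4*k*ε^2 := by
    have h1 : K / (4*ε^2) ≤ (⌈K / (4*ε^2)⌉₊ : ℝ) := Nat.le_ceil _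
    have h2 : (⌈K / (4*ε^2)⌉₊ : ℝ) + 1 = (k:ℝ) := by rw [hkdef]; push_cast; ring
    have h3 : K / (4*ε^2) < (k:ℝ) := by linarith
    calc K = K / (4*ε^2) * (4*ε^2) := by field_simp
      _ < (k:ℝ) * (4*ε^2) := by
          apply mul_lt_mul_of_pos_right h3 (by positivity)
      _ = 4*k*ε^2 := by ring
  have hδK : δ < 1 / K := by
    rw [hδ, div_lt_div_iff₀ (by positivity) (by linarith)]
    nlinarith
  have hδ1 : δ < 1 := by
    calc δ < 1/K := hδK
      _ ≤ 1 := by rw [div_le_one (by linarith)]; exact hK1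
  -- key: 2 * m^2 * δ^ε < 1
  have hKε : K ^ ε = 2 * (m:ℝ)^2 := by
    rw [hK, ← Real.rpow_mul (by positivity), one_div_mul_cancel hε0.ne', Real.rpow_one]
  have hsmall : 2 * (m:ℝ)^2 * δ ^ ε < 1 := by
    have h1 : δ ^ ε < (1/K) ^ ε := Real.rpow_lt_rpow hδ0.le hδK hε0
    have h2 : (1/K) ^ ε = 1 / K ^ ε := by
      rw [Real.div_rpow (by norm_num) (by linarith), Real.one_rpow]
    rw [h2, hKε] at h1
    have hm0 : (0:ℝ) < 2 * (m:ℝ)^2 := by linarith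
    calc 2 * (m:ℝ)^2 * δ ^ ε < 2 * (m:ℝ)^2 * (1 / (2 * (m:ℝ)^2)) :=
          mul_lt_mul_of_pos_left h1 hm0
      _ = 1 := by field_simp
  -- now fix n
  intro n hn
  have hn0 : (0:ℝ) < n := by exact_mod_cast hn
  set N : ℝ := (n:ℝ)^k with hN
  have hN0 : (0:ℝ) < N := by positivity
  set r : ℕ := ⌈ε * n⌉₊ with hr
  have hrn : r ≤ n := by
    rw [hr]
    exact Nat.ceil_le.2 (by nlinarith)
  have hεnr : ε * n ≤ (r:ℝ) := Nat.le_ceil _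
  -- bad tuple sets
  set Bt : (Fin n → Fin m) → Fin m → Finset (Fin k → Fin n) := fun z b =>
    Finset.univ.filter (fun t : Fin k → Fin n =>
      ε ≤ |((Finset.univ.filter (fun j : Fin k => z (t j) = b)).card : ℝ) / k
            - ((Finset.univ.filter (fun x : Fin n => z x = b)).card : ℝ) / n|) with hBt
  have hBt_card : ∀ (z : Fin n → Fin m) (b : Fin m), ((Bt z b).card : ℝ) ≤ δ * N := by
    intro z b
    have := cheb hn hk1 hε0 (fun v => z v = b)
    calc ((Bt z b).card : ℝ) ≤ (n:ℝ)^k / (4 * k * ε^2) := this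
      _ = δ * N := by rw [hδ, hN]; ring
  -- bad sampling-choice sets
  set badS : (Fin n → Fin m) → Fin m → Finset (Fin n → Fin k → Fin n) := fun z b =>
    Finset.univ.filter (fun S : Fin n → Fin k → Fin n =>
      ε * n ≤ ((Finset.univ.filter (fun i : Fin n =>
          ε ≤ |((Finset.univ.filter (fun j : Fin k => z (S i j) = b)).card : ℝ) / k
                - ((Finset.univ.filter (fun x : Fin n => z x = b)).card : ℝ) / n|)).card : ℝ))
    with hbadS
  have hbadS_card : ∀ (z : Fin n → Fin m) (b : Fin m),
      ((badS z b).card : ℝ) ≤ (n.choose r : ℝ) * ((δ*N)^r * N^(n-r)) := by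
    intro z b
    have hsub : badS z b ⊆ Finset.univ.filter (fun S : Fin n → Fin k → Fin n =>
        r ≤ (Finset.univ.filter (fun i => S i ∈ Bt z b)).card) := by
      intro S hS
      rw [hbadS, Finset.mem_filter] at hS
      rw [Finset.mem_filter]
      refine ⟨Finset.mem_univ _, ?_⟩
      have heq : (Finset.univ.filter (fun i => S i ∈ Bt z b))
          = (Finset.univ.filter (fun i : Fin n =>
              ε ≤ |((Finset.univ.filter (fun j : Fin k => z (S i j) = b)).card : ℝ) / k
                    - ((Finset.univ.filter (fun x : Fin n => z x = b)).card : ℝ) / n|)) := by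
        apply Finset.filter_congr
        intro i _
        rw [hBt]
        simp only [Finset.mem_filter, Finset.mem_univ, true_and]
      rw [heq, hr]
      exact Nat.ceil_le.2 hS.2
    calc ((badS z b).card : ℝ)
        ≤ ((Finset.univ.filter (fun S : Fin n → Fin k → Fin n =>
            r ≤ (Finset.univ.filter (fun i => S i ∈ Bt z b)).card)).card : ℝ) :=
          Nat.cast_le.mpr (Finset.card_le_card hsub)
      _ ≤ (n.choose r : ℝ) * ((δ*N)^r * N^(n-r)) := by
          have := count_many_bad_real (r := r) (Bt z b) (hBt_card z b)
          rw [hN]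
          exact this
  -- the key strict numeric inequality
  have hkey : ((m:ℝ)^n * m) * ((n.choose r : ℝ) * ((δ*N)^r * N^(n-r))) < N^n := by
    have hNsplit : (δ*N)^r * N^(n-r) = δ^r * N^n := by
      rw [mul_pow, mul_assoc, ← pow_add, Nat.add_sub_cancel' hrn]
    have hchoose : (n.choose r : ℝ) ≤ 2^n := by exact_mod_cast choose_le_two_pow' n r
    have hδr : δ^r ≤ (δ ^ ε)^n := by
      have e1 : δ^r = δ ^ ((r:ℕ):ℝ) := (Real.rpow_natCast δ r).symm
      have e2 : δ ^ ((r:ℕ):ℝ) ≤ δ ^ (ε * n) :=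
        Real.rpow_le_rpow_of_exponent_ge hδ0 hδ1.le hεnr
      have e3 : δ ^ (ε * n) = (δ ^ ε)^n := by
        rw [Real.rpow_mul hδ0.le, Real.rpow_natCast]
      rw [e1, ← e3]; exact e2
    have hmn : (m:ℝ)^n * m ≤ ((m:ℝ)^2)^n := by
      have hm1' : (1:ℝ) ≤ (m:ℝ) := by exact_mod_cast hm
      calc (m:ℝ)^n * m = (m:ℝ)^(n+1) := by rw [pow_succ]
        _ ≤ (m:ℝ)^(2*n) := pow_le_pow_right₀ hm1' (by omega)
        _ = ((m:ℝ)^2)^n := by rw [← pow_mul]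
    have hfinal : ((m:ℝ)^2)^n * (2^n * (δ^ε)^n) < 1 := by
      have : ((m:ℝ)^2)^n * (2^n * (δ^ε)^n) = (2 * (m:ℝ)^2 * δ^ε)^n := by
        rw [mul_pow, mul_pow]; ring
      rw [this]
      exact pow_lt_one₀ (by positivity) hsmall (by omega)
    have hδε0 : 0 ≤ δ ^ ε := Real.rpow_nonneg hδ0.le ε
    calc ((m:ℝ)^n * m) * ((n.choose r : ℝ) * ((δ*N)^r * N^(n-r)))
        = ((m:ℝ)^n * m) * ((n.choose r : ℝ) * δ^r) * N^n := by rw [hNsplit]; ring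
      _ ≤ ((m:ℝ)^2)^n * (2^n * (δ^ε)^n) * N^n := by
          apply mul_le_mul_of_nonneg_right _ (by positivity)
          have hb1 : (0:ℝ) ≤ (m:ℝ)^n * m := by positivity
          calc ((m:ℝ)^n * m) * ((n.choose r : ℝ) * δ^r)
              ≤ ((m:ℝ)^2)^n * ((n.choose r : ℝ) * δ^r) := by
                apply mul_le_mul_of_nonneg_right hmn (by positivity)
            _ ≤ ((m:ℝ)^2)^n * (2^n * (δ^ε)^n) := by
                apply mul_le_mul_of_nonneg_left _ (by positivity)
                exact mul_le_mul hchoose hδr (by positivity) (by positivity)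
      _ < 1 * N^n := by
          apply mul_lt_mul_of_pos_right hfinal (by positivity)
      _ = N^n := one_mul _
  -- sum over all configurations and labels
  have hsum : (∑ p : (Fin n → Fin m) × Fin m, ((badS p.1 p.2).card : ℝ)) < N^n := by
    calc (∑ p : (Fin n → Fin m) × Fin m, ((badS p.1 p.2).card : ℝ))
        ≤ ∑ p : (Fin n → Fin m) × Fin m, (n.choose r : ℝ) * ((δ*N)^r * N^(n-r)) :=
          Finset.sum_le_sum (fun p _ => hbadS_card p.1 p.2)
      _ = ((m:ℝ)^n * m) * ((n.choose r : ℝ) * ((δ*N)^r * N^(n-r))) := by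
          rw [Finset.sum_const, Finset.card_univ, nsmul_eq_mul]
          congr 1
          simp [Fintype.card_prod, Fintype.card_fun]
      _ < N^n := hkey
  -- find a good S
  have hcardΩ : (Fintype.card (Fin n → Fin k → Fin n) : ℝ) = N^n := by
    rw [Fintype.card_fun, hN]
    push_cast
    simp
  have hsum' : ∑ p : (Fin n → Fin m) × Fin m, (badS p.1 p.2).card
      < Fintype.card (Fin n → Fin k → Fin n) := by
    have : ((∑ p : (Fin n → Fin m) × Fin m, (badS p.1 p.2).card : ℕ) : ℝ)
        < (Fintype.card (Fin n → Fin k → Fin n) : ℝ) := by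
      rw [hcardΩ]; push_cast; exact hsum
    exact_mod_cast this
  set U := Finset.univ.biUnion (fun p : (Fin n → Fin m) × Fin m => badS p.1 p.2) with hU
  have hUcard : U.card < Fintype.card (Fin n → Fin k → Fin n) :=
    lt_of_le_of_lt Finset.card_biUnion_le hsum'
  have hexS : ∃ S : Fin n → Fin k → Fin n, S ∉ U := by
    by_contra hcon
    push_neg at hcon
    have hsub : (Finset.univ : Finset (Fin n → Fin k → Fin n)) ⊆ U := fun S _ => hcon S
    have := Finset.card_le_card hsub
    rw [Finset.card_univ] at this
    omega
  obtain ⟨S, hS⟩ := hexS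
  refine ⟨S, ?_⟩
  intro z b
  by_contra habs
  push_neg at habs
  apply hS
  rw [hU]
  refine Finset.mem_biUnion.2 ⟨(z, b), Finset.mem_univ _, ?_⟩
  rw [hbadS]
  exact Finset.mem_filter.2 ⟨Finset.mem_univ _, habs⟩
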